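/- Let F(x,y) = (−(x − s(y))/2 + (√3/2)y, −(√3/2)(x − s(y)) − y/2). A point (x,y) ∈ ℝ² has some iterate landing on the discontinuity line {y = 0} (i.e. there exists n ∈ ℕ with the second coordinate of Fⁿ(x,y) equal to 0) if and only if (x,y) lies on the grid 𝔉, i.e. there exists k ∈ ℤ with y = √3(x − 2k), or ℓ ∈ ℤ with y = √3ℓ, or m ∈ ℤ with y = −√3(x − 2m − 1). -/
import Mathlib


noncomputable def s (y : ℝ) : ℝ := if 0 ≤ y then 1 else -1

/-- The map `F_α` of the paper for `α = 2π/3`. -/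
noncomputable def F (q : ℝ × ℝ) : ℝ × ℝ :=
  (-(q.1 - s q.2) / 2 + (Real.sqrt 3 / 2) * q.2,
   -(Real.sqrt 3 / 2) * (q.1 - s q.2) - q.2 / 2)


noncomputable def eps (x : ℝ) : ℝ := if 0 ≤ x then 1/2 else -1/2

lemma eps_of_nonneg {x : ℝ} (h : 0 ≤ x) : eps x = 1/2 := if_pos h
lemma eps_of_neg {x : ℝ} (h : x < 0) : eps x = -(1/2) := by
  rw [eps, if_neg (not_le.2 h)]; norm_num
lemma eps_le (x : ℝ) : eps x ≤ 1/2 := by unfold eps; split <;> norm_num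
lemma eps_ge (x : ℝ) : -(1/2) ≤ eps x := by unfold eps; split <;> norm_num
lemma eps_sub_int (a b : ℝ) : ∃ z : ℤ, eps a - eps b = z := by
  unfold eps; split <;> split
  · exact ⟨0, by norm_num⟩
  · exact ⟨1, by norm_num⟩
  · exact ⟨-1, by push_cast; norm_num⟩
  · exact ⟨0, by norm_num⟩

lemma int_pos_of_ne {x : ℝ} (hz : ∃ z : ℤ, x = z) (h0 : x ≠ 0) (h : 0 ≤ x) : 1 ≤ x := by
  obtain ⟨z, rfl⟩ := hz
  have : 1 ≤ z := by
    rcases lt_or_ge z 1 with h1 | h1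
    · exfalso
      have : z = 0 := le_antisymm (by omega) (by exact_mod_cast h)
      exact h0 (by simp [this])
    · exact h1
  exact_mod_cast this

lemma int_neg_of_ne {x : ℝ} (hz : ∃ z : ℤ, x = z) (h0 : x ≠ 0) (h : x ≤ 0) : x ≤ -1 := by
  obtain ⟨z, rfl⟩ := hz
  have : z ≤ -1 := by
    rcases lt_or_ge (-1 : ℤ) z with h1 | h1
    · exfalso
      have : z = 0 := le_antisymm (by exact_mod_cast h) (by omega)
      exact h0 (by simp [this])
    · exact h1
  exact_mod_cast this

/-- Core dynamical lemma: the integer track of the triple-step dynamics hits 0. -/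
lemma key3 (A t c : ℕ → ℝ)
    (h1 : ∀ j, c j = eps (t j) - A j - t j)
    (h2 : ∀ j, A (j+1) = eps (c j) - t j - c j)
    (h3 : ∀ j, t (j+1) = eps (A (j+1)) - c j - A (j+1))
    (h0 : ∃ z : ℤ, A 0 = z) : ∃ j, A j = 0 := by
  -- derived step formulas
  have D1 : ∀ j, A (j+1) = A j + (eps (c j) - eps (t j)) := by
    intro j; rw [h2 j, h1 j]; ring
  have D2 : ∀ j, t (j+1) = t j + (eps (A (j+1)) - eps (c j)) := by
    intro j; rw [h3 j, h2 j, h1 j]; ring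
  have hint : ∀ j, ∃ z : ℤ, A j = z := by
    intro j; induction j with
    | zero => exact h0
    | succ n ih =>
      obtain ⟨z, hz⟩ := ih
      obtain ⟨d, hd⟩ := eps_sub_int (c n) (t n)
      exact ⟨z + d, by rw [D1 n, hz, hd]; push_cast; ring⟩
  by_contra hcon
  push_neg at hcon
  -- A never changes sign
  rcases le_or_gt 0 (A 0) with hs | hs
  · -- positive case : ∀ j, 1 ≤ A j
    have hpos : ∀ j, 1 ≤ A j := by
      intro j; induction j with
      | zero => exact int_pos_of_ne h0 (hcon 0) hs
      | succ n ih =>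
        refine int_pos_of_ne (hint (n+1)) (hcon (n+1)) ?_
        have := eps_ge (c n); have := eps_le (t n)
        rw [D1 n]; linarith
    have epsA : ∀ j, eps (A j) = 1/2 := fun j => eps_of_nonneg (by linarith [hpos j])
    by_cases hT : ∃ J, 0 ≤ t J
    · obtain ⟨J, hJ⟩ := hT
      -- descending phase : A decreases by 1 each step
      have SA : ∀ j, 0 ≤ t j → A (j+1) = A j - 1 ∧ t (j+1) = t j + 1 := by
        intro j hj
        have hc : c j < 0 := by
          rw [h1 j, eps_of_nonneg hj]; linarith [hpos j]
        constructor
        · rw [D1 j, eps_of_neg hc, eps_of_nonneg hj]; ring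
        · rw [D2 j, eps_of_neg hc, epsA (j+1)]; ring
      have HH : ∀ i, 0 ≤ t (J + i) ∧ A (J + i) = A J - i := by
        intro i; induction i with
        | zero => exact ⟨by simpa using hJ, by simp⟩
        | succ n ih =>
          obtain ⟨ht', hA'⟩ := ih
          obtain ⟨e1, e2⟩ := SA (J + n) ht'
          constructor
          · rw [show J + (n+1) = (J + n) + 1 by ring, e2]; linarith
          · rw [show J + (n+1) = (J + n) + 1 by ring, e1, hA']; push_cast; ring
      obtain ⟨z, hz⟩ := hint J
      have hz1 : 1 ≤ z := by have := hpos J; rw [hz] at this; exact_mod_cast this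
      have := (HH z.toNat).2
      rw [hz] at this
      have hzz : ((z.toNat : ℕ) : ℝ) = (z : ℝ) := by
        exact_mod_cast Int.toNat_of_nonneg (by omega : (0:ℤ) ≤ z)
      rw [hzz] at this
      exact absurd this (by have := hpos (J + z.toNat); intro h; rw [h] at this; linarith)
    · push_neg at hT
      have epst : ∀ j, eps (t j) = -(1/2) := fun j => eps_of_neg (hT j)
      have sum : ∀ j, A j + t j = A 0 + t 0 + j := by
        intro j; induction j with
        | zero => simp
        | succ n ih =>
          have : A (n+1) + t (n+1) = A n + t n + 1 := by
            rw [D1 n, D2 n, epst n, epsA (n+1)]; ring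
          rw [this, ih]; push_cast; ring
      have forced : ∀ j, -(1/2 : ℝ) < A j + t j → t (j+1) = t j + 1 := by
        intro j hj
        have hc : c j < 0 := by rw [h1 j, epst j]; linarith
        rw [D2 j, eps_of_neg hc, epsA (j+1)]; ring
      obtain ⟨j0, hj0⟩ := exists_nat_gt (-(A 0 + t 0))
      have HT : ∀ m, t (j0 + m) = t j0 + m := by
        intro m; induction m with
        | zero => simp
        | succ n ih =>
          have hbig : -(1/2 : ℝ) < A (j0 + n) + t (j0 + n) := by
            rw [sum (j0 + n)]; push_cast; linarith
          rw [show j0 + (n+1) = (j0 + n) + 1 by ring, forced _ hbig, ih]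
          push_cast; ring
      obtain ⟨m, hm⟩ := exists_nat_gt (-(t j0))
      have := HT m
      have := hT (j0 + m)
      linarith
  · -- negative case : ∀ j, A j ≤ -1
    have hneg : ∀ j, A j ≤ -1 := by
      intro j; induction j with
      | zero => exact int_neg_of_ne h0 (hcon 0) (le_of_lt hs)
      | succ n ih =>
        refine int_neg_of_ne (hint (n+1)) (hcon (n+1)) ?_
        have := eps_le (c n); have := eps_ge (t n)
        rw [D1 n]; linarith
    have epsA : ∀ j, eps (A j) = -(1/2) := fun j => eps_of_neg (by linarith [hneg j])
    by_cases hT : ∃ J, t J < 0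
    · obtain ⟨J, hJ⟩ := hT
      have SA : ∀ j, t j < 0 → A (j+1) = A j + 1 ∧ t (j+1) = t j - 1 := by
        intro j hj
        have hc : 0 ≤ c j := by
          rw [h1 j, eps_of_neg hj]; linarith [hneg j]
        constructor
        · rw [D1 j, eps_of_nonneg hc, eps_of_neg hj]; ring
        · rw [D2 j, eps_of_nonneg hc, epsA (j+1)]; ring
      have HH : ∀ i, t (J + i) < 0 ∧ A (J + i) = A J + i := by
        intro i; induction i with
        | zero => exact ⟨by simpa using hJ, by simp⟩
        | succ n ih =>
          obtain ⟨ht', hA'⟩ := ih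
          obtain ⟨e1, e2⟩ := SA (J + n) ht'
          constructor
          · rw [show J + (n+1) = (J + n) + 1 by ring, e2]; linarith
          · rw [show J + (n+1) = (J + n) + 1 by ring, e1, hA']; push_cast; ring
      obtain ⟨z, hz⟩ := hint J
      have hz1 : z ≤ -1 := by have := hneg J; rw [hz] at this; exact_mod_cast this
      have := (HH (-z).toNat).2
      rw [hz] at this
      have hzz : (((-z).toNat : ℕ) : ℝ) = -(z : ℝ) := by
        have := Int.toNat_of_nonneg (by omega : (0:ℤ) ≤ -z)
        exact_mod_cast this
      rw [hzz] at this
      exact absurd this (by have := hneg (J + (-z).toNat); intro h; rw [h] at this; linarith)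
    · push_neg at hT
      have epst : ∀ j, eps (t j) = 1/2 := fun j => eps_of_nonneg (hT j)
      have sum : ∀ j, A j + t j = A 0 + t 0 - j := by
        intro j; induction j with
        | zero => simp
        | succ n ih =>
          have : A (n+1) + t (n+1) = A n + t n - 1 := by
            rw [D1 n, D2 n, epst n, epsA (n+1)]; ring
          rw [this, ih]; push_cast; ring
      have forced : ∀ j, A j + t j < (1/2 : ℝ) → t (j+1) = t j - 1 := by
        intro j hj
        have hc : 0 ≤ c j := by rw [h1 j, epst j]; linarith
        rw [D2 j, eps_of_nonneg hc, epsA (j+1)]; ring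
      obtain ⟨j0, hj0⟩ := exists_nat_gt (A 0 + t 0)
      have HT : ∀ m, t (j0 + m) = t j0 - m := by
        intro m; induction m with
        | zero => simp
        | succ n ih =>
          have hsmall : A (j0 + n) + t (j0 + n) < (1/2 : ℝ) := by
            rw [sum (j0 + n)]; push_cast; linarith
          rw [show j0 + (n+1) = (j0 + n) + 1 by ring, forced _ hsmall, ih]
          push_cast; ring
      obtain ⟨m, hm⟩ := exists_nat_gt (t j0)
      have := HT m
      have := hT (j0 + m)
      linarith

noncomputable def seqv (x y : ℝ) (n : ℕ) : ℝ :=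
  ((F^[n] (x, y)).1 - (F^[n] (x, y)).2 / Real.sqrt 3) / 2

lemma sqrt3_pos : (0:ℝ) < Real.sqrt 3 := Real.sqrt_pos.mpr (by norm_num)
lemma sqrt3_ne : Real.sqrt 3 ≠ 0 := ne_of_gt sqrt3_pos
lemma sqrt3_sq : Real.sqrt 3 * Real.sqrt 3 = 3 := Real.mul_self_sqrt (by norm_num)

lemma div_sqrt3 (a : ℝ) : a / Real.sqrt 3 = Real.sqrt 3 * a / 3 := by
  rw [div_eq_div_iff sqrt3_ne (by norm_num : (3:ℝ) ≠ 0)]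
  linear_combination (-a) * sqrt3_sq

lemma eps_div (y : ℝ) : eps (y / Real.sqrt 3) = s y / 2 := by
  unfold eps s
  rcases le_or_gt 0 y with h | h
  · rw [if_pos (div_nonneg h sqrt3_pos.le), if_pos h]
  · rw [if_neg (not_le.2 (div_neg_of_neg_of_pos h sqrt3_pos)), if_neg (not_le.2 h)]

lemma seqv_succ (x y : ℝ) (n : ℕ) :
    seqv x y (n+1) = (F^[n] (x, y)).2 / Real.sqrt 3 := by
  unfold seqv
  rw [Function.iterate_succ_apply']
  set p := F^[n] (x, y)
  simp only [F]
  simp only [div_sqrt3]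
  linear_combination ((p.1 - s p.2)/12) * sqrt3_sq

lemma seqv_rec (x y : ℝ) (n : ℕ) :
    seqv x y (n+2) = eps (seqv x y (n+1)) - seqv x y n - seqv x y (n+1) := by
  have h1 : seqv x y (n+2) = (F^[n+1] (x, y)).2 / Real.sqrt 3 := seqv_succ x y (n+1)
  rw [h1, Function.iterate_succ_apply', seqv_succ x y n, eps_div]
  rw [show seqv x y n =
      ((F^[n] (x, y)).1 - (F^[n] (x, y)).2 / Real.sqrt 3) / 2 from rfl]
  set p := F^[n] (x, y)
  simp only [F]
  simp only [div_sqrt3]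
  linear_combination (-(p.1 - s p.2)/6) * sqrt3_sq

lemma seqv_zero (x y : ℝ) : seqv x y 0 = (x - y / Real.sqrt 3) / 2 := by
  unfold seqv; rw [Function.iterate_zero_apply]

lemma seqv_one (x y : ℝ) : seqv x y 1 = y / Real.sqrt 3 := by
  have := seqv_succ x y 0
  rwa [Function.iterate_zero_apply] at this

lemma seqv_two (x y : ℝ) :
    seqv x y 2 = eps (y / Real.sqrt 3) - (x + y / Real.sqrt 3) / 2 := by
  have := seqv_rec x y 0
  rw [seqv_one, seqv_zero] at this
  rw [this]; ring

lemma hit_iff (x y : ℝ) (n : ℕ) :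
    (F^[n] (x, y)).2 = 0 ↔ seqv x y (n+1) = 0 := by
  rw [seqv_succ, div_eq_zero_iff]
  constructor
  · exact fun h => Or.inl h
  · rintro (h | h)
    · exact h
    · exact (sqrt3_ne h).elim

lemma G1 (x y : ℝ) :
    (∃ k : ℤ, y = Real.sqrt 3 * (x - 2 * k)) ↔ ∃ z : ℤ, seqv x y 0 = z := by
  rw [seqv_zero]
  constructor
  · rintro ⟨k, rfl⟩
    refine ⟨k, ?_⟩
    rw [mul_div_cancel_left₀ _ sqrt3_ne]
    ring
  · rintro ⟨z, hz⟩
    refine ⟨z, ?_⟩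
    have h2 : y / Real.sqrt 3 = x - 2 * z := by linarith
    have := (div_eq_iff sqrt3_ne).mp h2
    rw [this]; ring

lemma G2 (x y : ℝ) :
    (∃ l : ℤ, y = Real.sqrt 3 * l) ↔ ∃ z : ℤ, seqv x y 1 = z := by
  rw [seqv_one]
  constructor
  · rintro ⟨l, rfl⟩
    exact ⟨l, by rw [mul_comm, mul_div_assoc, div_self sqrt3_ne, mul_one]⟩
  · rintro ⟨z, hz⟩
    exact ⟨z, by rw [← hz, mul_comm, div_mul_cancel₀ _ sqrt3_ne]⟩

lemma G3 (x y : ℝ) :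
    (∃ m : ℤ, y = -Real.sqrt 3 * (x - 2 * m - 1)) ↔ ∃ z : ℤ, seqv x y 2 = z := by
  rw [seqv_two]
  have key : ∀ m : ℤ, y = -Real.sqrt 3 * (x - 2 * m - 1) ↔
      x + y / Real.sqrt 3 = 2 * m + 1 := by
    intro m
    constructor
    · intro h
      rw [h, neg_mul, neg_div, mul_div_cancel_left₀ _ sqrt3_ne]
      ring
    · intro h
      have h2 : y / Real.sqrt 3 = -(x - 2*m - 1) := by linarith
      have := (div_eq_iff sqrt3_ne).mp h2
      rw [this]; ring
  rcases le_or_gt 0 (y / Real.sqrt 3) with hy | hy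
  · rw [eps, if_pos hy]
    constructor
    · rintro ⟨m, hm⟩
      have h := (key m).mp hm
      exact ⟨-m, by rw [show (x + y / Real.sqrt 3) = 2*m+1 from h]; push_cast; ring⟩
    · rintro ⟨z, hz⟩
      refine ⟨-z, (key (-z)).mpr ?_⟩
      push_cast
      linarith
  · rw [eps, if_neg (not_le.2 hy)]
    constructor
    · rintro ⟨m, hm⟩
      have h := (key m).mp hm
      exact ⟨-m-1, by rw [show (x + y / Real.sqrt 3) = 2*m+1 from h]; push_cast; ring⟩
    · rintro ⟨z, hz⟩
      refine ⟨-z-1, (key (-z-1)).mpr ?_⟩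
      push_cast
      linarith

lemma eps_sub_int' (a b : ℝ) : ∃ z : ℤ, eps a - eps b = z := by
  unfold eps; split <;> split
  · exact ⟨0, by norm_num⟩
  · exact ⟨1, by norm_num⟩
  · exact ⟨-1, by push_cast; norm_num⟩
  · exact ⟨0, by norm_num⟩

lemma seqv3 (x y : ℝ) (k : ℕ) : ∃ z : ℤ, seqv x y (k+3) = seqv x y k + z := by
  obtain ⟨z, hz⟩ := eps_sub_int' (seqv x y (k+2)) (seqv x y (k+1))
  refine ⟨z, ?_⟩
  have r1 := seqv_rec x y k
  have r2 : seqv x y (k+3) =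
      eps (seqv x y (k+2)) - seqv x y (k+1) - seqv x y (k+2) := by
    have h := seqv_rec x y (k+1)
    rw [show k+1+2 = k+3 from by omega, show k+1+1 = k+2 from by omega] at h
    exact h
  linear_combination r2 - r1 + hz

lemma down (x y : ℝ) : ∀ m : ℕ, (∃ z : ℤ, seqv x y m = z) →
    (∃ z : ℤ, seqv x y 0 = z) ∨ (∃ z : ℤ, seqv x y 1 = z) ∨
      (∃ z : ℤ, seqv x y 2 = z) := by
  intro m
  induction m using Nat.strong_induction_on with
  | _ m ih =>
    rcases m with _ | (_ | (_ | k))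
    · exact fun h => Or.inl h
    · exact fun h => Or.inr (Or.inl h)
    · exact fun h => Or.inr (Or.inr h)
    · rintro ⟨z, hz⟩
      obtain ⟨d, hd⟩ := seqv3 x y k
      rw [show k+3 = k+1+1+1 from by omega] at hd
      refine ih k (by omega) ⟨z - d, ?_⟩
      push_cast
      rw [hd] at hz
      linarith

/-- A point has some iterate landing on `{y = 0}` iff it lies on the
trihexagonal grid `𝔉`. -/
theorem critical_set_two_pi_div_three (x y : ℝ) :
    (∃ n : ℕ, (F^[n] (x, y)).2 = 0) ↔
      ((∃ k : ℤ, y = Real.sqrt 3 * (x - 2 * k)) ∨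
       (∃ ℓ : ℤ, y = Real.sqrt 3 * ℓ) ∨
       (∃ m : ℤ, y = -Real.sqrt 3 * (x - 2 * m - 1))) := by
  constructor
  · rintro ⟨n, hn⟩
    have h0 : ∃ z : ℤ, seqv x y (n+1) = z :=
      ⟨0, by rw [(hit_iff x y n).mp hn]; norm_num⟩
    rcases down x y (n+1) h0 with h | h | h
    · exact Or.inl ((G1 x y).mpr h)
    · exact Or.inr (Or.inl ((G2 x y).mpr h))
    · exact Or.inr (Or.inr ((G3 x y).mpr h))
  · intro hg
    have hN : ∃ N : ℕ, 1 ≤ N ∧ ∃ z : ℤ, seqv x y N = z := by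
      rcases hg with h | h | h
      · obtain ⟨z, hz⟩ := (G1 x y).mp h
        obtain ⟨d, hd⟩ := seqv3 x y 0
        rw [show (0:ℕ)+3 = 3 from by omega] at hd
        exact ⟨3, by norm_num, z + d, by rw [hd, hz]; push_cast; ring⟩
      · exact ⟨1, le_refl 1, (G2 x y).mp h⟩
      · exact ⟨2, by norm_num, (G3 x y).mp h⟩
    obtain ⟨N, hN1, hNz⟩ := hN
    have H1 : ∀ j : ℕ, seqv x y (N + 3*j + 2) =
        eps (seqv x y (N + 3*j + 1)) - seqv x y (N + 3*j) - seqv x y (N + 3*j + 1) :=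
      fun j => seqv_rec x y (N + 3*j)
    have H2 : ∀ j : ℕ, seqv x y (N + 3*(j+1)) =
        eps (seqv x y (N + 3*j + 2)) - seqv x y (N + 3*j + 1) - seqv x y (N + 3*j + 2) := by
      intro j
      have h := seqv_rec x y (N + 3*j + 1)
      rw [show N+3*j+1+2 = N+3*(j+1) from by omega,
          show N+3*j+1+1 = N+3*j+2 from by omega] at h
      exact h
    have H3 : ∀ j : ℕ, seqv x y (N + 3*(j+1) + 1) =
        eps (seqv x y (N + 3*(j+1))) - seqv x y (N + 3*j + 2) - seqv x y (N + 3*(j+1)) := by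
      intro j
      have h := seqv_rec x y (N + 3*j + 2)
      rw [show N+3*j+2+2 = N+3*(j+1)+1 from by omega,
          show N+3*j+2+1 = N+3*(j+1) from by omega] at h
      exact h
    obtain ⟨j, hj⟩ := key3 (fun j => seqv x y (N + 3*j))
      (fun j => seqv x y (N + 3*j + 1)) (fun j => seqv x y (N + 3*j + 2))
      H1 H2 H3 (by simpa using hNz)
    have hj' : seqv x y (N + 3*j) = 0 := hj
    obtain ⟨n, hn⟩ : ∃ n, N + 3*j = n + 1 := ⟨N + 3*j - 1, by omega⟩
    exact ⟨n, (hit_iff x y n).mpr (by rw [← hn]; exact hj')⟩
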